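/- Let Y be a nonnegative random variable such that for every integer m ≥ 1, E[Y^m]^{1/m} ≤ b(m) r, where r > 0, b(2m)^{2m} = (2m)!/(m! 2^m) and b(2m+1)^{2m+1} = (2m+1)!/((m+1)! sqrt(m+1/2)) 2^{-(m+1/2)}. Then for every t in [0, 1/(2r)), E[exp(t Y)] ≤ (1 + t r) exp(t² r² / 2). -/

import Mathlib

open MeasureTheory ProbabilityTheory Real

/-- `khinchineConstPow m = b(m)^m` where `b(2m)^{2m} = (2m)!/(m! 2^m)` and
`b(2m+1)^{2m+1} = (2m+1)!/((m+1)! √(m+1/2)) 2^{-(m+1/2)}`. -/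
noncomputable def khinchineConstPow (m : ℕ) : ℝ :=
  if m % 2 = 0 then
    (Nat.factorial m : ℝ) / ((Nat.factorial (m / 2) : ℝ) * 2 ^ (m / 2))
  else
    (Nat.factorial m : ℝ) / ((Nat.factorial (m / 2 + 1) : ℝ) *
      Real.sqrt ((m / 2 : ℕ) + 1 / 2)) * (2 : ℝ) ^ (-((m : ℝ) / 2))

lemma kcp_nonneg (m : ℕ) : 0 ≤ khinchineConstPow m := by
  unfold khinchineConstPow
  split <;> positivity

lemma kcp_zero : khinchineConstPow 0 = 1 := by
  simp [khinchineConstPow]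

lemma kcp_even (k : ℕ) : khinchineConstPow (2 * k) =
    (Nat.factorial (2 * k) : ℝ) / ((Nat.factorial k : ℝ) * 2 ^ k) := by
  simp [khinchineConstPow, Nat.mul_mod_right, Nat.mul_div_cancel_left]

lemma kcp_odd (k : ℕ) : khinchineConstPow (2 * k + 1) =
    (Nat.factorial (2 * k + 1) : ℝ) / ((Nat.factorial (k + 1) : ℝ) *
      Real.sqrt ((k : ℝ) + 1 / 2)) * (2 : ℝ) ^ (-(((2 * k + 1 : ℕ) : ℝ) / 2)) := by
  have h1 : (2 * k + 1) % 2 = 1 := by omega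
  have h2 : (2 * k + 1) / 2 = k := by omega
  rw [khinchineConstPow]
  rw [if_neg (by omega), h2]

/-- even-index term of the series equals the exponential series term -/
lemma even_term (c : ℝ) (k : ℕ) :
    khinchineConstPow (2 * k) * c ^ (2 * k) / Nat.factorial (2 * k) =
    (c ^ 2 / 2) ^ k / Nat.factorial k := by
  rw [kcp_even]
  have h1 : (Nat.factorial (2 * k) : ℝ) ≠ 0 := Nat.cast_ne_zero.2 (Nat.factorial_ne_zero _)
  have h2 : (Nat.factorial k : ℝ) ≠ 0 := Nat.cast_ne_zero.2 (Nat.factorial_ne_zero _)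
  rw [pow_mul, div_pow]
  field_simp

lemma odd_term_le (c : ℝ) (hc : 0 ≤ c) (k : ℕ) :
    khinchineConstPow (2 * k + 1) * c ^ (2 * k + 1) / Nat.factorial (2 * k + 1) ≤
    c * ((c ^ 2 / 2) ^ k / Nat.factorial k) := by
  rw [kcp_odd]
  have h1 : (Nat.factorial (2 * k + 1) : ℝ) ≠ 0 := Nat.cast_ne_zero.2 (Nat.factorial_ne_zero _)
  have h2 : (0 : ℝ) < Nat.factorial k := by exact_mod_cast Nat.factorial_pos k
  have h3 : (0 : ℝ) < Nat.factorial (k + 1) := by exact_mod_cast Nat.factorial_pos (k + 1)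
  have hs : (0 : ℝ) < Real.sqrt ((k : ℝ) + 1 / 2) := Real.sqrt_pos.2 (by positivity)
  -- rewrite the rpow
  have hrpow : (2 : ℝ) ^ (-(((2 * k + 1 : ℕ) : ℝ) / 2)) =
      (1 / 2 : ℝ) ^ k * (2 : ℝ) ^ (-(1 / 2) : ℝ) := by
    push_cast
    rw [show -(((2 * (k : ℝ) + 1)) / 2) = (-(k : ℝ)) + (-(1 / 2) : ℝ) by ring,
      Real.rpow_add (by norm_num), Real.rpow_neg (by norm_num), Real.rpow_natCast]
    rw [one_div, inv_pow]
  rw [hrpow]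
  -- key inequality : 2^{-1/2} ≤ (k+1) * sqrt (k+1/2)
  have hkey : (2 : ℝ) ^ (-(1 / 2) : ℝ) ≤ ((k : ℝ) + 1) * Real.sqrt ((k : ℝ) + 1 / 2) := by
    have e1 : (2 : ℝ) ^ (-(1 / 2) : ℝ) = Real.sqrt (1 / 2) := by
      rw [Real.rpow_neg (by norm_num : (0:ℝ) ≤ 2), ← Real.sqrt_eq_rpow, ← Real.sqrt_inv]
      norm_num
    rw [e1]
    have h4 : Real.sqrt (1 / 2) ≤ Real.sqrt ((k : ℝ) + 1 / 2) :=
      Real.sqrt_le_sqrt (by linarith [(Nat.cast_nonneg k : (0:ℝ) ≤ (k:ℝ))])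
    nlinarith [Real.sqrt_nonneg ((k : ℝ) + 1 / 2), (Nat.cast_nonneg k : (0:ℝ) ≤ (k:ℝ))]
  -- now compare
  have hcpow : (0 : ℝ) ≤ c ^ (2 * k + 1) := pow_nonneg hc _
  have hfk : (Nat.factorial (k + 1) : ℝ) = ((k : ℝ) + 1) * Nat.factorial k := by
    rw [Nat.factorial_succ]; push_cast; ring
  have lhs_eq : (Nat.factorial (2 * k + 1) : ℝ) / ((Nat.factorial (k + 1) : ℝ) *
      Real.sqrt ((k : ℝ) + 1 / 2)) * ((1 / 2 : ℝ) ^ k * (2 : ℝ) ^ (-(1 / 2) : ℝ)) *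
      c ^ (2 * k + 1) / Nat.factorial (2 * k + 1) =
      c ^ (2 * k + 1) * (1 / 2 : ℝ) ^ k * ((2 : ℝ) ^ (-(1 / 2) : ℝ) /
        ((Nat.factorial (k + 1) : ℝ) * Real.sqrt ((k : ℝ) + 1 / 2))) := by
    field_simp
  have rhs_eq : c * ((c ^ 2 / 2) ^ k / Nat.factorial k) =
      c ^ (2 * k + 1) * (1 / 2 : ℝ) ^ k * (1 / (Nat.factorial k : ℝ)) := by
    have hcp : c ^ (2 * k + 1) = (c ^ 2) ^ k * c := by rw [pow_succ, pow_mul]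
    rw [div_pow, hcp]
    field_simp
    have h12 : (1/2:ℝ)^k * 2^k = 1 := by rw [← mul_pow]; norm_num
    linear_combination (-(c * c ^ (k * 2))) * h12
  rw [lhs_eq, rhs_eq]
  have hfrac : (2 : ℝ) ^ (-(1 / 2) : ℝ) /
      ((Nat.factorial (k + 1) : ℝ) * Real.sqrt ((k : ℝ) + 1 / 2)) ≤
      1 / (Nat.factorial k : ℝ) := by
    rw [div_le_div_iff₀ (by positivity) h2]
    rw [hfk]
    calc (2 : ℝ) ^ (-(1 / 2) : ℝ) * Nat.factorial k
        ≤ (((k : ℝ) + 1) * Real.sqrt ((k : ℝ) + 1 / 2)) * Nat.factorial k := by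
          apply mul_le_mul_of_nonneg_right hkey h2.le
      _ = 1 * (((k : ℝ) + 1) * (Nat.factorial k : ℝ) * Real.sqrt ((k : ℝ) + 1 / 2)) := by ring
  apply mul_le_mul_of_nonneg_left hfrac (by positivity)

theorem moment_bounds_laplace_estimate {Ω : Type*} [MeasureSpace Ω]
    [IsProbabilityMeasure (ℙ : Measure Ω)]
    (Y : Ω → ℝ) (hYmeas : Measurable Y) (hYpos : ∀ ω, 0 ≤ Y ω)
    (r : ℝ) (hr : 0 < r)
    (hmom : ∀ m : ℕ, 1 ≤ m →
      ∫⁻ ω, ENNReal.ofReal (Y ω ^ m) ∂ℙ ≤ ENNReal.ofReal (khinchineConstPow m * r ^ m))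
    (t : ℝ) (ht : t ∈ Set.Ico (0 : ℝ) (1 / (2 * r))) :
    ∫⁻ ω, ENNReal.ofReal (Real.exp (t * Y ω)) ∂ℙ ≤
      ENNReal.ofReal ((1 + t * r) * Real.exp (t ^ 2 * r ^ 2 / 2)) := by
  obtain ⟨ht0, -⟩ := ht
  set c : ℝ := t * r with hc_def
  have hc : 0 ≤ c := mul_nonneg ht0 hr.le
  set f : ℕ → ℝ := fun n => khinchineConstPow n * c ^ n / Nat.factorial n with hf_def
  have hf_nonneg : ∀ n, 0 ≤ f n := fun n => by
    have := kcp_nonneg n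
    positivity
  set x : ℝ := c ^ 2 / 2 with hx_def
  have hx : 0 ≤ x := by positivity
  -- summability
  have he : Summable (fun k => x ^ k / Nat.factorial k) := Real.summable_pow_div_factorial x
  have he' : Summable (fun k => f (2 * k)) := by
    apply he.congr
    intro k
    exact (even_term c k).symm
  have ho : Summable (fun k => f (2 * k + 1)) := by
    apply Summable.of_nonneg_of_le (fun k => hf_nonneg _) (fun k => ?_) (he.mul_left c)
    exact odd_term_le c hc k
  have hf_sum : Summable f := he'.even_add_odd ho
  -- value of exp as tsum
  have hexp : ∀ y : ℝ, Real.exp y = ∑' n, y ^ n / Nat.factorial n := by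
    intro y
    rw [Real.exp_eq_exp_ℝ, NormedSpace.exp_eq_tsum_div]
  -- sum bound
  have htsum_le : ∑' n, f n ≤ (1 + c) * Real.exp x := by
    rw [← tsum_even_add_odd he' ho]
    have h1 : ∑' k, f (2 * k) = Real.exp x := by
      rw [hexp x]
      exact tsum_congr fun k => even_term c k
    have h2 : ∑' k, f (2 * k + 1) ≤ c * Real.exp x := by
      calc ∑' k, f (2 * k + 1) ≤ ∑' k, c * (x ^ k / Nat.factorial k) :=
            Summable.tsum_le_tsum (fun k => odd_term_le c hc k) ho (he.mul_left c)
        _ = c * Real.exp x := by rw [tsum_mul_left, hexp x]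
    rw [h1]
    linarith
  -- the series in ENNReal
  calc ∫⁻ ω, ENNReal.ofReal (Real.exp (t * Y ω)) ∂ℙ
      = ∫⁻ ω, ∑' n, ENNReal.ofReal ((t * Y ω) ^ n / Nat.factorial n) ∂ℙ := by
        apply lintegral_congr
        intro ω
        rw [hexp (t * Y ω), ENNReal.ofReal_tsum_of_nonneg]
        · intro n
          have := hYpos ω
          positivity
        · exact Real.summable_pow_div_factorial _
    _ = ∑' n, ∫⁻ ω, ENNReal.ofReal ((t * Y ω) ^ n / Nat.factorial n) ∂ℙ := by
        apply lintegral_tsum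
        intro n
        exact ((((hYmeas.const_mul t).pow_const n).div_const _).ennreal_ofReal).aemeasurable
    _ ≤ ∑' n, ENNReal.ofReal (f n) := by
        apply ENNReal.tsum_le_tsum
        intro n
        have hconst : (0 : ℝ) ≤ t ^ n / Nat.factorial n := by positivity
        have hterm : ∀ ω, (t * Y ω) ^ n / Nat.factorial n =
            (t ^ n / Nat.factorial n) * Y ω ^ n := fun ω => by
          rw [mul_pow]; ring
        simp_rw [hterm]
        simp_rw [fun ω => ENNReal.ofReal_mul (q := Y ω ^ n) hconst]
        rw [lintegral_const_mul _ ((hYmeas.pow_const n).ennreal_ofReal)]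
        match n with
        | 0 =>
          simp only [pow_zero, Nat.factorial_zero]
          rw [hf_def]
          simp [kcp_zero, measure_univ]
        | (m + 1) =>
          calc ENNReal.ofReal (t ^ (m+1) / Nat.factorial (m+1)) *
                ∫⁻ ω, ENNReal.ofReal (Y ω ^ (m+1)) ∂ℙ
              ≤ ENNReal.ofReal (t ^ (m+1) / Nat.factorial (m+1)) *
                ENNReal.ofReal (khinchineConstPow (m+1) * r ^ (m+1)) := by
                exact mul_le_mul_right (hmom (m+1) (Nat.succ_le_succ (Nat.zero_le m))) _
            _ = ENNReal.ofReal (f (m+1)) := by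
                rw [← ENNReal.ofReal_mul hconst]
                congr 1
                simp only [hf_def, hc_def]
                rw [mul_pow]
                ring
    _ = ENNReal.ofReal (∑' n, f n) := (ENNReal.ofReal_tsum_of_nonneg hf_nonneg hf_sum).symm
    _ ≤ ENNReal.ofReal ((1 + t * r) * Real.exp (t ^ 2 * r ^ 2 / 2)) := by
        apply ENNReal.ofReal_le_ofReal
        have : x = t ^ 2 * r ^ 2 / 2 := by rw [hx_def, hc_def]; ring
        rw [← this, ← hc_def]
        exact htsum_le
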